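/- (6op EFT over addition) For all x, y ∈ D with β = 2 and under nearest rounding with t > 1 and no overflow, the sequence z = fl(x+y), w = fl(z−x), z1 = fl(y−w), v = fl(w−z), z2 = fl(x+v), zz = fl(z1+z2) satisfies z + zz = x + y exactly. -/
import Mathlib


/-- Dekker's floating point number system as a set of reals. -/
def Dekker (β : ℤ) (t : ℕ) (Emin Emax : ℤ) : Set ℝ :=
  {x | ∃ m e : ℤ, |m| < β ^ t ∧ Emin ≤ e ∧ e ≤ Emax ∧ x = (m : ℝ) * (β : ℝ) ^ e}

namespace Dekker6op

/-- The largest element of the system. -/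
noncomputable def Omg (t : ℕ) (Emax : ℤ) : ℝ := ((2 ^ t - 1 : ℤ) : ℝ) * (2 : ℝ) ^ Emax

lemma two_zpow_pos (i : ℤ) : (0:ℝ) < 2 ^ i := zpow_pos (by norm_num) i

lemma two_zpow_le {i j : ℤ} (h : i ≤ j) : (2:ℝ) ^ i ≤ 2 ^ j :=
  zpow_le_zpow_right₀ one_le_two h

lemma two_zpow_lt {i j : ℤ} (h : i < j) : (2:ℝ) ^ i < 2 ^ j :=
  zpow_lt_zpow_right₀ one_lt_two h

lemma lt_of_two_zpow_lt {i j : ℤ} (h : (2:ℝ) ^ i < 2 ^ j) : i < j := by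
  by_contra hc; push_neg at hc; exact absurd h (not_lt.2 (two_zpow_le hc))

lemma zadd (i j : ℤ) : (2:ℝ) ^ (i + j) = 2 ^ i * 2 ^ j := zpow_add₀ (by norm_num) i j

lemma two_pow_cast (t : ℕ) : ((2 ^ t : ℤ) : ℝ) = (2:ℝ) ^ (t : ℤ) := by
  push_cast
  exact (zpow_natCast 2 t).symm

variable {t : ℕ} {Emin Emax : ℤ}

lemma mem_dk {a : ℝ} : a ∈ Dekker 2 t Emin Emax ↔
    ∃ m e : ℤ, |m| < 2 ^ t ∧ Emin ≤ e ∧ e ≤ Emax ∧ a = (m : ℝ) * (2:ℝ) ^ e := by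
  constructor
  · rintro ⟨m, e, h1, h2, h3, h4⟩
    exact ⟨m, e, h1, h2, h3, by rw [h4]; norm_num⟩
  · rintro ⟨m, e, h1, h2, h3, h4⟩
    exact ⟨m, e, h1, h2, h3, by rw [h4]; norm_num⟩

lemma dk_le {a : ℝ} (ha : a ∈ Dekker 2 t Emin Emax) : Emin ≤ Emax := by
  obtain ⟨m, e, _, h2, h3, _⟩ := mem_dk.1 ha; omega

lemma dk_grid {k g : ℤ} (h1 : Emin ≤ g) (h2 : g ≤ Emax) (hk : |k| < 2 ^ t) :
    ((k : ℝ) * 2 ^ g) ∈ Dekker 2 t Emin Emax :=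
  mem_dk.2 ⟨k, g, hk, h1, h2, rfl⟩

lemma dk_zero (hEE : Emin ≤ Emax) : (0:ℝ) ∈ Dekker 2 t Emin Emax :=
  mem_dk.2 ⟨0, Emax, by simpa using pow_pos (show (0:ℤ) < 2 by norm_num) t,
    hEE, le_refl _, by norm_num⟩

lemma dk_neg {a : ℝ} (ha : a ∈ Dekker 2 t Emin Emax) : -a ∈ Dekker 2 t Emin Emax := by
  obtain ⟨m, e, h1, h2, h3, h4⟩ := mem_dk.1 ha
  exact mem_dk.2 ⟨-m, e, by simpa using h1, h2, h3, by rw [h4]; push_cast; ring⟩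

lemma dk_bound {a : ℝ} (ha : a ∈ Dekker 2 t Emin Emax) : |a| ≤ Omg t Emax := by
  obtain ⟨m, e, h1, h2, h3, h4⟩ := mem_dk.1 ha
  have hm : |(m:ℝ)| ≤ ((2 ^ t - 1 : ℤ) : ℝ) := by
    rw [← Int.cast_abs]; exact_mod_cast (by omega : |m| ≤ 2 ^ t - 1)
  have h5 : (0:ℝ) ≤ ((2 ^ t - 1 : ℤ) : ℝ) := by
    have : (0:ℤ) ≤ 2 ^ t - 1 := by have := pow_pos (show (0:ℤ) < 2 by norm_num) t; omega
    exact_mod_cast this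
  rw [h4, abs_mul, abs_of_pos (two_zpow_pos e)]
  unfold Omg
  calc |(m:ℝ)| * 2 ^ e ≤ ((2 ^ t - 1 : ℤ) : ℝ) * 2 ^ e :=
        mul_le_mul_of_nonneg_right hm (two_zpow_pos e).le
    _ ≤ ((2 ^ t - 1 : ℤ) : ℝ) * 2 ^ Emax :=
        mul_le_mul_of_nonneg_left (two_zpow_le h3) h5


lemma Omg_lt : Omg t Emax < 2 ^ ((t:ℤ) + Emax) := by
  unfold Omg
  rw [zadd, ← two_pow_cast]
  have h1 : ((2 ^ t - 1 : ℤ) : ℝ) < ((2 ^ t : ℤ) : ℝ) := by exact_mod_cast (by omega : (2:ℤ)^t - 1 < 2 ^ t)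
  exact mul_lt_mul_of_pos_right h1 (two_zpow_pos Emax)

lemma Omg_mem (ht : 1 ≤ t) (hEE : Emin ≤ Emax) : Omg t Emax ∈ Dekker 2 t Emin Emax := by
  refine mem_dk.2 ⟨2 ^ t - 1, Emax, ?_, hEE, le_refl _, rfl⟩
  have := pow_pos (show (0:ℤ) < 2 by norm_num) t
  rw [abs_of_nonneg (by omega)]; omega

lemma mult_down {a : ℝ} {g g' : ℤ} (h : g' ≤ g) (hm : ∃ k : ℤ, a = (k:ℝ) * 2 ^ g) :
    ∃ k : ℤ, a = (k:ℝ) * 2 ^ g' := by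
  obtain ⟨k, hk⟩ := hm
  refine ⟨k * 2 ^ ((g - g').toNat), ?_⟩
  have h2 : ((g - g').toNat : ℤ) = g - g' := Int.toNat_of_nonneg (by omega)
  have h3 : (2:ℝ) ^ g = 2 ^ (g - g') * 2 ^ g' := by rw [← zadd]; congr 1; ring
  rw [hk, h3]
  push_cast
  rw [← zpow_natCast (2:ℝ) ((g - g').toNat), h2]
  ring

lemma mant_lt {k g : ℤ} (h : |(k:ℝ) * 2 ^ g| < 2 ^ ((t:ℤ) + g)) : |k| < 2 ^ t := by
  rw [abs_mul, abs_of_pos (two_zpow_pos g), ← Int.cast_abs, zadd] at h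
  have h2 := lt_of_mul_lt_mul_right h (two_zpow_pos g).le
  rw [← two_pow_cast] at h2
  exact_mod_cast h2

lemma mant_le {k g : ℤ} (h : |(k:ℝ) * 2 ^ g| ≤ 2 ^ ((t:ℤ) + g)) : |k| ≤ 2 ^ t := by
  rw [abs_mul, abs_of_pos (two_zpow_pos g), ← Int.cast_abs, zadd] at h
  have h2 := le_of_mul_le_mul_right h (two_zpow_pos g)
  rw [← two_pow_cast] at h2
  exact_mod_cast h2

lemma mant_real {k : ℤ} (h : |k| < 2 ^ t) : |(k:ℝ)| ≤ 2 ^ (t:ℤ) - 1 := by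
  rw [← Int.cast_abs]
  have h2 : (|k| : ℝ) ≤ ((2 ^ t - 1 : ℤ) : ℝ) := by exact_mod_cast (by omega : |k| ≤ 2 ^ t - 1)
  rw [← two_pow_cast]; push_cast at h2 ⊢; linarith

lemma dk_mult_big {a : ℝ} (ha : a ∈ Dekker 2 t Emin Emax) {j : ℤ}
    (hj : (2:ℝ) ^ ((t:ℤ) + j) ≤ |a|) : ∃ k : ℤ, a = (k:ℝ) * 2 ^ (j + 1) := by
  obtain ⟨m, e, h1, h2, h3, h4⟩ := mem_dk.1 ha
  have he : j + 1 ≤ e := by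
    by_contra hc; push_neg at hc
    have h5 : |(m:ℝ)| < 2 ^ (t:ℤ) := by
      rw [← Int.cast_abs, ← two_pow_cast]; exact_mod_cast h1
    have h6 : |a| < 2 ^ ((t:ℤ) + j) := by
      rw [h4, abs_mul, abs_of_pos (two_zpow_pos e), zadd]
      calc |(m:ℝ)| * 2 ^ e ≤ |(m:ℝ)| * 2 ^ j :=
            mul_le_mul_of_nonneg_left (two_zpow_le (show e ≤ j by omega)) (abs_nonneg _)
        _ < 2 ^ (t:ℤ) * 2 ^ j := mul_lt_mul_of_pos_right h5 (two_zpow_pos j)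
    linarith
  exact mult_down he ⟨m, h4⟩

/-- The canonical exponent. -/
noncomputable def dkExp (t : ℕ) (Emin : ℤ) (a : ℝ) : ℤ := max Emin (Int.log 2 |a| - t + 1)

lemma dkExp_ge {a : ℝ} : Emin ≤ dkExp t Emin a := le_max_left _ _

lemma dkExp_lt {a : ℝ} : |a| < 2 ^ ((t:ℤ) + dkExp t Emin a) := by
  have h1 : |a| < (2:ℝ) ^ (Int.log 2 |a| + 1) := by
    have := Int.lt_zpow_succ_log_self (show 1 < 2 by norm_num) |a|
    simpa using this
  refine lt_of_lt_of_le h1 (two_zpow_le ?_)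
  have := le_max_right Emin (Int.log 2 |a| - t + 1)
  unfold dkExp; omega

lemma dkExp_mult {a : ℝ} (ha : a ∈ Dekker 2 t Emin Emax) (ha0 : a ≠ 0) :
    ∃ k : ℤ, a = (k:ℝ) * 2 ^ (dkExp t Emin a) := by
  rcases le_or_gt (Int.log 2 |a| - t + 1) Emin with hc | hc
  · have h1 : dkExp t Emin a = Emin := max_eq_left hc
    rw [h1]
    obtain ⟨m, e, _, h2, _, h4⟩ := mem_dk.1 ha
    exact mult_down h2 ⟨m, h4⟩
  · have h1 : dkExp t Emin a = Int.log 2 |a| - t + 1 := max_eq_right hc.le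
    have h2 : (2:ℝ) ^ ((t:ℤ) + (dkExp t Emin a - 1)) ≤ |a| := by
      rw [show (t:ℤ) + (dkExp t Emin a - 1) = Int.log 2 |a| by omega]
      have := Int.zpow_log_le_self (show 1 < 2 by norm_num) (abs_pos.2 ha0)
      simpa using this
    obtain ⟨k, hk⟩ := dk_mult_big ha h2
    refine ⟨k, ?_⟩
    conv_rhs => rw [show dkExp t Emin a = dkExp t Emin a - 1 + 1 from by ring]
    exact hk

lemma dkExp_le_max {a : ℝ} (ha : a ∈ Dekker 2 t Emin Emax) (ha0 : a ≠ 0) :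
    dkExp t Emin a ≤ Emax := by
  have h1 : |a| < 2 ^ ((t:ℤ) + Emax) := lt_of_le_of_lt (dk_bound ha) Omg_lt
  have h1' : |a| < ((2:ℕ):ℝ) ^ ((t:ℤ) + Emax) := by simpa using h1
  have h2 := (Int.lt_zpow_iff_log_lt (show 1 < 2 by norm_num) (abs_pos.2 ha0)).1 h1'
  have := dk_le ha
  unfold dkExp; omega

lemma dkExp_mono {a b : ℝ} (ha0 : a ≠ 0) (h : |a| ≤ |b|) :
    dkExp t Emin a ≤ dkExp t Emin b := by
  have := Int.log_mono_right (b := 2) (abs_pos.2 ha0) h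
  unfold dkExp; omega

variable {fl : ℝ → ℝ}

lemma fl_id (hnear : ∀ x, ∀ a ∈ Dekker 2 t Emin Emax, |fl x - x| ≤ |a - x|)
    {a : ℝ} (ha : a ∈ Dekker 2 t Emin Emax) : fl a = a := by
  have h := hnear a a ha
  simp only [sub_self, abs_zero] at h
  have h2 : |fl a - a| = 0 := le_antisymm h (abs_nonneg _)
  exact sub_eq_zero.1 (abs_eq_zero.1 h2)

lemma fl_sat (hmem : ∀ x, fl x ∈ Dekker 2 t Emin Emax)
    (hnear : ∀ x, ∀ a ∈ Dekker 2 t Emin Emax, |fl x - x| ≤ |a - x|)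
    (ht : 1 ≤ t) (hEE : Emin ≤ Emax) {u : ℝ} (hu : Omg t Emax < u) : fl u = Omg t Emax := by
  have h1 := hnear u _ (Omg_mem ht hEE)
  rw [show |Omg t Emax - u| = u - Omg t Emax from by
    rw [abs_of_nonpos (by linarith)]; ring] at h1
  have h2 := abs_le.1 h1
  have h3 := (abs_le.1 (dk_bound (hmem u))).2
  exact le_antisymm h3 (by linarith [h2.1])

lemma round_step (ht : 1 ≤ t)
    (hmem : ∀ x, fl x ∈ Dekker 2 t Emin Emax)
    (hnear : ∀ x, ∀ a ∈ Dekker 2 t Emin Emax, |fl x - x| ≤ |a - x|)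
    {p q s : ℝ} (hp : p ∈ Dekker 2 t Emin Emax) (hq : q ∈ Dekker 2 t Emin Emax)
    (hs : s = p + q) {g : ℤ} (hg1 : Emin ≤ g) (hg2 : g ≤ Emax)
    (hpm : ∃ k : ℤ, p = (k:ℝ) * 2 ^ g) (hqm : ∃ k : ℤ, q = (k:ℝ) * 2 ^ g)
    (hqb : |q| < 2 ^ ((t:ℤ) + g)) (hov : |s| ≤ Omg t Emax) :
    (fl s - s ∈ Dekker 2 t Emin Emax) ∧ (∃ k : ℤ, fl s = (k:ℝ) * 2 ^ g) ∧
    (∃ k : ℤ, fl s - s = (k:ℝ) * 2 ^ g) ∧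
    (fl s = s ∨ ∃ h : ℤ, g < h ∧ h ≤ Emax ∧ 2 ^ ((t:ℤ) + h - 1) ≤ |s| ∧
      |s| < 2 ^ ((t:ℤ) + h) ∧ |fl s - s| ≤ 2 ^ (h - 1) ∧
      ∃ k : ℤ, fl s = (k:ℝ) * 2 ^ (h - 1)) := by
  obtain ⟨kp, hkp⟩ := hpm
  obtain ⟨kq, hkq⟩ := hqm
  have hsm : s = ((kp + kq : ℤ) : ℝ) * 2 ^ g := by rw [hs, hkp, hkq]; push_cast; ring
  by_cases hin : |s| < 2 ^ ((t:ℤ) + g)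
  · have hks : |kp + kq| < 2 ^ t := mant_lt (by rw [← hsm]; exact hin)
    have hsD : s ∈ Dekker 2 t Emin Emax := hsm ▸ dk_grid hg1 hg2 hks
    have hfl : fl s = s := fl_id hnear hsD
    refine ⟨?_, ⟨kp + kq, by rw [hfl, hsm]⟩, ⟨0, by rw [hfl]; simp⟩, Or.inl hfl⟩
    rw [hfl, sub_self]; exact dk_zero (le_trans hg1 hg2)
  · push_neg at hin
    have hs0 : s ≠ 0 := by
      intro h; rw [h, abs_zero] at hin; exact absurd hin (not_le.2 (two_zpow_pos _))
    have hL1 : (2:ℝ) ^ (Int.log 2 |s|) ≤ |s| := by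
      have := Int.zpow_log_le_self (show 1 < 2 by norm_num) (abs_pos.2 hs0)
      simpa using this
    have hL2 : |s| < (2:ℝ) ^ (Int.log 2 |s| + 1) := by
      have := Int.lt_zpow_succ_log_self (show 1 < 2 by norm_num) |s|
      simpa using this
    obtain ⟨h, hhdef⟩ : ∃ h : ℤ, h = Int.log 2 |s| - t + 1 := ⟨_, rfl⟩
    have hs1 : (2:ℝ) ^ ((t:ℤ) + h - 1) ≤ |s| := by
      rw [show (t:ℤ) + h - 1 = Int.log 2 |s| by omega]; exact hL1
    have hs2 : |s| < 2 ^ ((t:ℤ) + h) := by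
      rw [show (t:ℤ) + h = Int.log 2 |s| + 1 by omega]; exact hL2
    have hgh : g < h := by
      have := lt_of_two_zpow_lt (lt_of_le_of_lt hin hs2); omega
    have hhE : h ≤ Emax := by
      have h1 : (2:ℝ) ^ ((t:ℤ) + h - 1) < 2 ^ ((t:ℤ) + Emax) :=
        lt_of_le_of_lt (le_trans hs1 hov) Omg_lt
      have := lt_of_two_zpow_lt h1; omega
    have h2pos := two_zpow_pos h
    obtain ⟨kc, hkcdef⟩ : ∃ kc : ℤ, kc = round (s / 2 ^ h) := ⟨_, rfl⟩
    have hchalf : (2:ℝ) ^ (h - 1) = (1/2) * 2 ^ h := by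
      rw [show h - 1 = (-1) + h by ring, zadd]; norm_num
    have hcs : |(kc:ℝ) * 2 ^ h - s| ≤ 2 ^ (h - 1) := by
      have e1 : (kc:ℝ) * 2 ^ h - s = ((kc:ℝ) - s / 2 ^ h) * 2 ^ h := by
        field_simp
      have e2 : |(kc:ℝ) - s / 2 ^ h| ≤ 1/2 := by
        rw [hkcdef, abs_sub_comm]; exact abs_sub_round _
      calc |(kc:ℝ) * 2 ^ h - s| = |(kc:ℝ) - s / 2 ^ h| * 2 ^ h := by
            rw [e1, abs_mul, abs_of_pos h2pos]
        _ ≤ (1/2) * 2 ^ h := mul_le_mul_of_nonneg_right e2 h2pos.le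
        _ = 2 ^ (h - 1) := hchalf.symm
    have hcb : |(kc:ℝ) * 2 ^ h| ≤ |s| + 2 ^ (h - 1) := by
      calc |(kc:ℝ) * 2 ^ h| = |((kc:ℝ) * 2 ^ h - s) + s| := by ring_nf
        _ ≤ |(kc:ℝ) * 2 ^ h - s| + |s| := abs_add_le _ _
        _ ≤ |s| + 2 ^ (h - 1) := by linarith
    have hkc_le : |kc| ≤ 2 ^ t := by
      have h1 : |(kc:ℝ) * 2 ^ h| < 2 ^ ((t:ℤ) + h) + 2 ^ (h - 1) := by linarith
      have h2 : |(kc:ℝ)| * 2 ^ h < (2 ^ (t:ℤ) + 1) * 2 ^ h := by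
        rw [abs_mul, abs_of_pos h2pos] at h1
        rw [show (2:ℝ) ^ ((t:ℤ) + h) = 2 ^ (t:ℤ) * 2 ^ h from zadd _ _] at h1
        have h3 : (2:ℝ) ^ (h - 1) < 1 * 2 ^ h := by
          rw [one_mul]; exact two_zpow_lt (by omega)
        nlinarith
      have h3 : |(kc:ℝ)| < 2 ^ (t:ℤ) + 1 := lt_of_mul_lt_mul_right h2 h2pos.le
      have h4 : |kc| < 2 ^ t + 1 := by
        rw [← Int.cast_abs, ← two_pow_cast] at h3
        exact_mod_cast h3
      omega
    have hcD : (kc:ℝ) * 2 ^ h ∈ Dekker 2 t Emin Emax := by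
      rcases lt_or_eq_of_le hkc_le with hlt | heq
      · exact dk_grid (by omega) hhE hlt
      · have hkcr : |(kc:ℝ)| = 2 ^ (t:ℤ) := by
          rw [← Int.cast_abs, heq, two_pow_cast]
        have habs : |(kc:ℝ) * 2 ^ h| = 2 ^ ((t:ℤ) + h) := by
          rw [abs_mul, abs_of_pos h2pos, hkcr]
          exact (zadd _ _).symm
        have hhlt : h < Emax := by
          by_contra hc2; push_neg at hc2
          have hEq : h = Emax := le_antisymm hhE hc2
          have hb1 : (2:ℝ) ^ ((t:ℤ) + h) - 2 ^ (h - 1) ≤ |s| := by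
            have := abs_sub_abs_le_abs_sub ((kc:ℝ) * 2 ^ h) s
            linarith [habs ▸ this]
          have hb2 : Omg t Emax = 2 ^ ((t:ℤ) + Emax) - 2 ^ Emax := by
            unfold Omg; rw [zadd, ← two_pow_cast]; push_cast; ring
          have hb3 : (2:ℝ) ^ (h - 1) < 2 ^ Emax := two_zpow_lt (by omega)
          rw [hEq] at hb1 hb3
          linarith
        have h2t : (2:ℝ) ^ ((t:ℤ) + h) = ((2 ^ (t - 1) : ℤ) : ℝ) * 2 ^ (h + 1) := by
          rw [two_pow_cast, ← zadd]
          congr 1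
          have h9 : ((t - 1 : ℕ) : ℤ) = (t:ℤ) - 1 := by omega
          omega
        have hm2 : |(2 ^ (t - 1) : ℤ)| < 2 ^ t := by
          rw [abs_of_nonneg (by positivity)]
          exact pow_lt_pow_right₀ (by norm_num) (by omega)
        rcases (abs_eq (two_zpow_pos ((t:ℤ) + h)).le).1 habs with he | he
        · rw [he, h2t]
          exact dk_grid (k := 2 ^ (t-1)) (g := h + 1) (by omega) (by omega) hm2
        · rw [he, h2t]
          exact dk_neg (dk_grid (k := 2 ^ (t-1)) (g := h + 1) (by omega) (by omega) hm2)
    have hrd : |fl s - s| ≤ 2 ^ (h - 1) := le_trans (hnear s _ hcD) hcs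
    have hrlb : (2:ℝ) ^ ((t:ℤ) + h - 2) ≤ |fl s| := by
      have h1 : |s| - 2 ^ (h - 1) ≤ |fl s| := by
        have := abs_sub_abs_le_abs_sub s (fl s)
        rw [abs_sub_comm] at this
        linarith
      have h2 : (2:ℝ) ^ (h - 1) ≤ 2 ^ ((t:ℤ) + h - 2) := two_zpow_le (by omega)
      have h3 : (2:ℝ) ^ ((t:ℤ) + h - 1) = 2 ^ ((t:ℤ) + h - 2) + 2 ^ ((t:ℤ) + h - 2) := by
        rw [show (t:ℤ) + h - 1 = ((t:ℤ) + h - 2) + 1 by ring, zpow_add_one₀ (by norm_num)]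
        ring
      linarith
    have hrm : ∃ k : ℤ, fl s = (k:ℝ) * 2 ^ (h - 1) := by
      obtain ⟨k, hk⟩ := dk_mult_big (hmem s)
        (j := h - 2) (by rw [show (t:ℤ) + (h - 2) = (t:ℤ) + h - 2 by ring]; exact hrlb)
      exact ⟨k, by rw [hk]; congr 1; ring⟩
    have hrmg : ∃ k : ℤ, fl s = (k:ℝ) * 2 ^ g := mult_down (by omega) hrm
    have herrm : ∃ k : ℤ, fl s - s = (k:ℝ) * 2 ^ g := by
      obtain ⟨k1, e1⟩ := hrmg
      exact ⟨k1 - (kp + kq), by rw [e1, hsm]; push_cast; ring⟩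
    have herrb : |fl s - s| ≤ |q| := by
      have := hnear s p hp
      rwa [show p - s = -q from by rw [hs]; ring, abs_neg] at this
    have herrD : fl s - s ∈ Dekker 2 t Emin Emax := by
      obtain ⟨k, hk⟩ := herrm
      rw [hk]
      exact dk_grid hg1 hg2 (mant_lt (by rw [← hk]; exact lt_of_le_of_lt herrb hqb))
    exact ⟨herrD, hrmg, herrm, Or.inr ⟨h, hgh, hhE, hs1, hs2, hrd, hrm⟩⟩

lemma fast (ht : 1 ≤ t)
    (hmem : ∀ x, fl x ∈ Dekker 2 t Emin Emax)
    (hnear : ∀ x, ∀ a ∈ Dekker 2 t Emin Emax, |fl x - x| ≤ |a - x|)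
    {a b s : ℝ} (ha : a ∈ Dekker 2 t Emin Emax) (hb : b ∈ Dekker 2 t Emin Emax)
    (hs : s = a + b) (hba : |b| ≤ |a|) (hov : |s| ≤ Omg t Emax) :
    fl s - a ∈ Dekker 2 t Emin Emax := by
  have hEE : Emin ≤ Emax := dk_le ha
  by_cases hb0 : b = 0
  · have h1 : s = a := by rw [hs, hb0, add_zero]
    rw [h1, fl_id hnear ha, sub_self]
    exact dk_zero hEE
  have ha0 : a ≠ 0 := by
    intro h; apply hb0
    rw [h, abs_zero] at hba
    exact abs_eq_zero.1 (le_antisymm hba (abs_nonneg b))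
  obtain ⟨gb, hgb⟩ : ∃ g : ℤ, g = dkExp t Emin b := ⟨_, rfl⟩
  obtain ⟨ga, hga⟩ : ∃ g : ℤ, g = dkExp t Emin a := ⟨_, rfl⟩
  have hgba : gb ≤ ga := by rw [hga, hgb]; exact dkExp_mono hb0 hba
  have hgb1 : Emin ≤ gb := by rw [hgb]; exact dkExp_ge
  have hgbE : gb ≤ Emax := by rw [hgb]; exact dkExp_le_max hb hb0
  have hbmul : ∃ k : ℤ, b = (k:ℝ) * 2 ^ gb := by rw [hgb]; exact dkExp_mult hb hb0
  have hamul : ∃ k : ℤ, a = (k:ℝ) * 2 ^ ga := by rw [hga]; exact dkExp_mult ha ha0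
  have hblt : |b| < 2 ^ ((t:ℤ) + gb) := by rw [hgb]; exact dkExp_lt
  have halt : |a| < 2 ^ ((t:ℤ) + ga) := by rw [hga]; exact dkExp_lt
  obtain ⟨hdD, hrg, hdm, hcase⟩ :=
    round_step ht hmem hnear ha hb hs hgb1 hgbE (mult_down hgba hamul) hbmul hblt hov
  rcases hcase with hex | ⟨h, hgh, hhE, hs1, hs2, hd1, hrm⟩
  · rw [hex, hs, add_sub_cancel_left]; exact hb
  · have hga1 : h ≤ ga + 1 := by
      have h4 : (2:ℝ) ^ ((t:ℤ) + (ga + 1)) = 2 ^ ((t:ℤ) + ga) + 2 ^ ((t:ℤ) + ga) := by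
        rw [show (t:ℤ) + (ga + 1) = ((t:ℤ) + ga) + 1 by ring, zpow_add_one₀ (by norm_num)]
        ring
      have h1 : |s| < 2 ^ ((t:ℤ) + (ga + 1)) := by
        have h2 : |s| ≤ |a| + |b| := hs ▸ abs_add_le a b
        linarith
      have := lt_of_two_zpow_lt (lt_of_le_of_lt hs1 h1)
      omega
    obtain ⟨kb, hkb⟩ := hbmul
    have hkb_lt : |kb| < 2 ^ t := mant_lt (by rw [← hkb]; exact hblt)
    obtain ⟨kd, hkd⟩ := hdm
    obtain ⟨kr, hkr⟩ := hrm
    obtain ⟨ka, hka⟩ := mult_down (show h - 1 ≤ ga by omega) hamul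
    have hub : |fl s - a| ≤ |b| + |fl s - s| := by
      have h1 : fl s - a = b + (fl s - s) := by rw [hs]; ring
      rw [h1]; exact abs_add_le _ _
    rcases le_or_gt h (gb + 1) with hc2 | hc2
    · have hum : fl s - a = ((kb + kd : ℤ) : ℝ) * 2 ^ gb := by
        have h1 : fl s - a = b + (fl s - s) := by rw [hs]; ring
        rw [h1, hkb, hkd]; push_cast; ring
      have hb1 : |b| ≤ (2 ^ (t:ℤ) - 1) * 2 ^ gb := by
        rw [hkb, abs_mul, abs_of_pos (two_zpow_pos _)]
        exact mul_le_mul_of_nonneg_right (mant_real hkb_lt) (two_zpow_pos _).le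
      have habs : |fl s - a| ≤ 2 ^ ((t:ℤ) + gb) := by
        have h5 : |fl s - s| ≤ 2 ^ gb := le_trans hd1 (two_zpow_le (by omega))
        have h6 : (2:ℝ) ^ ((t:ℤ) + gb) = 2 ^ (t:ℤ) * 2 ^ gb := zadd _ _
        nlinarith [two_zpow_pos gb]
      have hk2 : |kb + kd| ≤ 2 ^ t := mant_le (by rw [← hum]; exact habs)
      rcases lt_or_eq_of_le hk2 with hlt | heq2
      · rw [hum]; exact dk_grid hgb1 hgbE hlt
      · have hkr2 : |((kb + kd : ℤ) : ℝ)| = 2 ^ (t:ℤ) := by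
          rw [← Int.cast_abs, heq2, two_pow_cast]
        have habs2 : |fl s - a| = 2 ^ ((t:ℤ) + gb) := by
          rw [hum, abs_mul, abs_of_pos (two_zpow_pos _), hkr2]
          exact (zadd _ _).symm
        have h2t : (2:ℝ) ^ ((t:ℤ) + gb) = ((2 ^ (t - 1) : ℤ) : ℝ) * 2 ^ (gb + 1) := by
          rw [two_pow_cast, ← zadd]
          congr 1
          have h9 : ((t - 1 : ℕ) : ℤ) = (t:ℤ) - 1 := by omega
          omega
        have hm2 : |(2 ^ (t - 1) : ℤ)| < 2 ^ t := by
          rw [abs_of_nonneg (by positivity)]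
          exact pow_lt_pow_right₀ (by norm_num) (by omega)
        rcases (abs_eq (two_zpow_pos ((t:ℤ) + gb)).le).1 habs2 with he | he
        · rw [he, h2t]
          exact dk_grid (k := 2 ^ (t - 1)) (g := gb + 1) (by omega) (by omega) hm2
        · rw [he, h2t]
          exact dk_neg (dk_grid (k := 2 ^ (t - 1)) (g := gb + 1) (by omega) (by omega) hm2)
    · have hum : fl s - a = ((kr - ka : ℤ) : ℝ) * 2 ^ (h - 1) := by
        rw [hkr, hka]; push_cast; ring
      have habs : |fl s - a| < 2 ^ ((t:ℤ) + (h - 1)) := by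
        have h6 : (2:ℝ) ^ ((t:ℤ) + gb) ≤ 2 ^ ((t:ℤ) + h - 2) := two_zpow_le (by omega)
        have h7 : (2:ℝ) ^ (h - 1) ≤ 2 ^ ((t:ℤ) + h - 2) := two_zpow_le (by omega)
        have h8 : (2:ℝ) ^ ((t:ℤ) + (h - 1)) = 2 ^ ((t:ℤ) + h - 2) + 2 ^ ((t:ℤ) + h - 2) := by
          rw [show (t:ℤ) + (h - 1) = ((t:ℤ) + h - 2) + 1 by ring, zpow_add_one₀ (by norm_num)]
          ring
        linarith
      rw [hum]
      exact dk_grid (by omega) (by omega) (mant_lt (by rw [← hum]; exact habs))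

set_option maxHeartbeats 2000000 in
lemma aux (ht : 1 ≤ t)
    (hmem : ∀ x, fl x ∈ Dekker 2 t Emin Emax)
    (hnear : ∀ x, ∀ a ∈ Dekker 2 t Emin Emax, |fl x - x| ≤ |a - x|)
    {x y z w z1 v z2 zz : ℝ}
    (hx : x ∈ Dekker 2 t Emin Emax) (hy : y ∈ Dekker 2 t Emin Emax)
    (hov : |x + y| ≤ Omg t Emax) (hsgn : 0 ≤ x + y)
    (hz : z = fl (x + y)) (hw : w = fl (z - x)) (hz1 : z1 = fl (y - w))
    (hv : v = fl (w - z)) (hz2 : z2 = fl (x + v)) (hzz : zz = fl (z1 + z2)) :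
    z + zz = x + y := by
  have hEE : Emin ≤ Emax := dk_le hx
  have h0D : (0:ℝ) ∈ Dekker 2 t Emin Emax := dk_zero hEE
  have fl0 : fl 0 = 0 := fl_id hnear h0D
  by_cases hx0 : x = 0
  · subst hx0
    have e1 : z = y := by rw [hz, zero_add, fl_id hnear hy]
    have e2 : w = y := by rw [hw, e1, sub_zero, fl_id hnear hy]
    have e3 : z1 = 0 := by rw [hz1, e2, sub_self, fl0]
    have e4 : v = 0 := by rw [hv, e2, e1, sub_self, fl0]
    have e5 : z2 = 0 := by rw [hz2, e4, add_zero, fl0]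
    have e6 : zz = 0 := by rw [hzz, e3, e5, add_zero, fl0]
    linarith [e1, e6]
  by_cases hy0 : y = 0
  · subst hy0
    have e1 : z = x := by rw [hz, add_zero, fl_id hnear hx]
    have e2 : w = 0 := by rw [hw, e1, sub_self, fl0]
    have e3 : z1 = 0 := by rw [hz1, e2, sub_zero, fl0]
    have e4 : v = -x := by rw [hv, e2, e1, zero_sub, fl_id hnear (dk_neg hx)]
    have e5 : z2 = 0 := by rw [hz2, e4, add_neg_cancel, fl0]
    have e6 : zz = 0 := by rw [hzz, e3, e5, add_zero, fl0]
    linarith [e1, e6]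
  obtain ⟨gx, hgx⟩ : ∃ g : ℤ, g = dkExp t Emin x := ⟨_, rfl⟩
  obtain ⟨gy, hgy⟩ : ∃ g : ℤ, g = dkExp t Emin y := ⟨_, rfl⟩
  have hgx1 : Emin ≤ gx := by rw [hgx]; exact dkExp_ge
  have hgy1 : Emin ≤ gy := by rw [hgy]; exact dkExp_ge
  have hgxE : gx ≤ Emax := by rw [hgx]; exact dkExp_le_max hx hx0
  have hgyE : gy ≤ Emax := by rw [hgy]; exact dkExp_le_max hy hy0
  have hxmul : ∃ k : ℤ, x = (k:ℝ) * 2 ^ gx := by rw [hgx]; exact dkExp_mult hx hx0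
  have hymul : ∃ k : ℤ, y = (k:ℝ) * 2 ^ gy := by rw [hgy]; exact dkExp_mult hy hy0
  have hxlt : |x| < 2 ^ ((t:ℤ) + gx) := by rw [hgx]; exact dkExp_lt
  have hylt : |y| < 2 ^ ((t:ℤ) + gy) := by rw [hgy]; exact dkExp_lt
  rcases le_total |y| |x| with hcmp | hcmp
  · -- Case A : |y| ≤ |x|
    have hgyx : gy ≤ gx := by rw [hgx, hgy]; exact dkExp_mono hy0 hcmp
    obtain ⟨hdD, hzg, hdm, _⟩ :=
      round_step ht hmem hnear hx hy rfl hgy1 hgyE (mult_down hgyx hxmul) hymul hylt hov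
    rw [← hz] at hdD
    have huD : z - x ∈ Dekker 2 t Emin Emax := by
      rw [hz]; exact fast ht hmem hnear hx hy rfl hcmp hov
    have hmdD : -(z - (x + y)) ∈ Dekker 2 t Emin Emax := dk_neg hdD
    have e2 : w = z - x := by rw [hw, fl_id hnear huD]
    have e3 : z1 = -(z - (x + y)) := by
      rw [hz1, e2, show y - (z - x) = -(z - (x + y)) from by ring, fl_id hnear hmdD]
    have e4 : v = -x := by
      rw [hv, e2, show z - x - z = -x from by ring, fl_id hnear (dk_neg hx)]
    have e5 : z2 = 0 := by rw [hz2, e4, add_neg_cancel, fl0]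
    have e6 : zz = -(z - (x + y)) := by rw [hzz, e3, e5, add_zero, fl_id hnear hmdD]
    rw [e6]; ring
  · -- Case B : |x| ≤ |y|
    have hgxy : gx ≤ gy := by rw [hgx, hgy]; exact dkExp_mono hx0 hcmp
    obtain ⟨hdD, hzg, hdm, hcase⟩ :=
      round_step ht hmem hnear hy hx (add_comm x y) hgx1 hgxE (mult_down hgxy hymul)
        hxmul hxlt hov
    rw [← hz] at hdD hzg hdm hcase
    rcases hcase with hex | ⟨h, hgh, hhE, hs1, hs2, hd1, hzm⟩
    · -- exact addition
      have e0 : z = x + y := hex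
      have e2 : w = y := by rw [hw, e0, show x + y - x = y from by ring, fl_id hnear hy]
      have e3 : z1 = 0 := by rw [hz1, e2, sub_self, fl0]
      have e4 : v = -x := by
        rw [hv, e2, e0, show y - (x + y) = -x from by ring, fl_id hnear (dk_neg hx)]
      have e5 : z2 = 0 := by rw [hz2, e4, add_neg_cancel, fl0]
      have e6 : zz = 0 := by rw [hzz, e3, e5, add_zero, fl0]
      rw [e0, e6]; ring
    · -- inexact addition
      have hdxb : |z - (x + y)| ≤ |x| := by
        have h1 := hnear (x + y) y hy
        rw [show y - (x + y) = -x from by ring, abs_neg, ← hz] at h1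
        exact h1
      have hdyb : |z - (x + y)| ≤ |y| := by
        have h1 := hnear (x + y) x hx
        rw [show x - (x + y) = -y from by ring, abs_neg, ← hz] at h1
        exact h1
      have hsne : x + y ≠ 0 := by
        intro hh
        rw [hh, abs_zero] at hs1
        exact absurd hs1 (not_le.2 (two_zpow_pos _))
      have hspos : 0 < x + y := lt_of_le_of_ne hsgn (Ne.symm hsne)
      have hypos : 0 < y := by
        rcases le_or_gt y 0 with hyn | hyp
        · have h1 : |y| = -y := abs_of_nonpos hyn
          have h2 : x ≤ -y := le_trans (le_abs_self x) (hcmp.trans_eq h1)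
          linarith
        · exact hyp
      have huyd : z - x = y + (z - (x + y)) := by ring
      rcases le_or_gt |z - x| (Omg t Emax) with husmall | hubig
      · -- no saturation
        have hzD : z ∈ Dekker 2 t Emin Emax := hz ▸ hmem (x + y)
        have hxz : |x| ≤ |z| := by
          obtain ⟨kx, hkx⟩ := hxmul
          have h1 : |x| ≤ (2 ^ (t:ℤ) - 1) * 2 ^ gx := by
            rw [hkx, abs_mul, abs_of_pos (two_zpow_pos _)]
            exact mul_le_mul_of_nonneg_right
              (mant_real (mant_lt (by rw [← hkx]; exact hxlt))) (two_zpow_pos _).le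
          have h2 : ((2:ℝ) ^ (t:ℤ) - 1) * 2 ^ gx ≤ (2 ^ (t:ℤ) - 1) * 2 ^ (h - 1) := by
            have h3 : (1:ℝ) ≤ 2 ^ (t:ℤ) := by
              have := two_zpow_le (show (0:ℤ) ≤ (t:ℤ) by positivity)
              simpa using this
            exact mul_le_mul_of_nonneg_left (two_zpow_le (by omega)) (by linarith)
          have h4 : ((2:ℝ) ^ (t:ℤ) - 1) * 2 ^ (h - 1) = 2 ^ ((t:ℤ) + h - 1) - 2 ^ (h - 1) := by
            rw [show (t:ℤ) + h - 1 = (t:ℤ) + (h - 1) by ring, zadd]; ring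
          have h5 : |x + y| - |z - (x + y)| ≤ |z| := by
            have h6 := abs_sub_abs_le_abs_sub (x + y) z
            rw [abs_sub_comm] at h6
            linarith
          linarith
        have hwzD : w - z ∈ Dekker 2 t Emin Emax := by
          have h1 := fast ht hmem hnear hzD (dk_neg hx)
            (show z - x = z + -x from by ring) (by rwa [abs_neg]) husmall
          rw [hw]; exact h1
        have hwyD : w - y ∈ Dekker 2 t Emin Emax := by
          have h1 := fast ht hmem hnear hy hdD huyd (le_trans hdxb hcmp) husmall
          rw [hw]; exact h1
        obtain ⟨hd2D, hwg, hd2m, _⟩ :=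
          round_step ht hmem hnear hy hdD huyd hgx1 hgxE (mult_down hgxy hymul) hdm
            (lt_of_le_of_lt hdxb hxlt) husmall
        rw [← hw] at hd2D
        have e3 : z1 = y - w := by
          rw [hz1, show y - w = -(w - y) from by ring, fl_id hnear (dk_neg hwyD)]
        have e4 : v = w - z := by rw [hv, fl_id hnear hwzD]
        have e5 : z2 = w - (z - x) := by
          rw [hz2, e4, show x + (w - z) = w - (z - x) from by ring, fl_id hnear hd2D]
        have e6 : zz = -(z - (x + y)) := by
          rw [hzz, e3, e5, show y - w + (w - (z - x)) = -(z - (x + y)) from by ring,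
            fl_id hnear (dk_neg hdD)]
        rw [e6]; ring
      · -- saturation
        have hyleO : y ≤ Omg t Emax := le_trans (le_abs_self y) (dk_bound hy)
        have hdlex : z - (x + y) ≤ |x| := le_trans (le_abs_self _) hdxb
        have hdgex : -|x| ≤ z - (x + y) := neg_le_of_abs_le hdxb
        have hunn : 0 ≤ z - x := by
          have h1 : |x| ≤ y := le_trans hcmp (le_of_eq (abs_of_pos hypos))
          linarith
        have huO : Omg t Emax < z - x := by rwa [abs_of_nonneg hunn] at hubig
        have hwO : w = Omg t Emax := by rw [hw]; exact fl_sat hmem hnear ht hEE huO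
        have hhgy : h ≤ gy + 1 := by
          have h4 : (2:ℝ) ^ ((t:ℤ) + (gy + 1)) = 2 ^ ((t:ℤ) + gy) + 2 ^ ((t:ℤ) + gy) := by
            rw [show (t:ℤ) + (gy + 1) = ((t:ℤ) + gy) + 1 by ring, zpow_add_one₀ (by norm_num)]
            ring
          have h1 : |x + y| < 2 ^ ((t:ℤ) + (gy + 1)) := by
            have h2 : |x + y| ≤ |x| + |y| := abs_add_le x y
            linarith [hcmp]
          have := lt_of_two_zpow_lt (lt_of_le_of_lt hs1 h1)
          omega
        have hyO : y = Omg t Emax := by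
          obtain ⟨kO, hkO⟩ : ∃ k : ℤ, Omg t Emax = (k:ℝ) * 2 ^ gy :=
            mult_down hgyE ⟨2 ^ t - 1, by unfold Omg; norm_num⟩
          obtain ⟨ky, hky⟩ := hymul
          have hd2 : Omg t Emax - y = ((kO - ky : ℤ) : ℝ) * 2 ^ gy := by
            rw [hkO, hky]; push_cast; ring
          have hb1 : 0 ≤ Omg t Emax - y := by linarith
          have hb2 : Omg t Emax - y < 2 ^ gy := by
            have h5 : Omg t Emax - y < z - (x + y) := by linarith
            have h6 : z - (x + y) ≤ 2 ^ (h - 1) := le_trans (le_abs_self _) hd1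
            have h7 : (2:ℝ) ^ (h - 1) ≤ 2 ^ gy := two_zpow_le (by omega)
            linarith
          rw [hd2] at hb1 hb2
          have hc1 : (0:ℝ) ≤ ((kO - ky : ℤ) : ℝ) := by
            by_contra hcon; push_neg at hcon
            nlinarith [two_zpow_pos gy]
          have hc2 : ((kO - ky : ℤ) : ℝ) < 1 := by
            by_contra hcon; push_neg at hcon
            nlinarith [two_zpow_pos gy]
          have hk0 : kO - ky = 0 := by
            have hc1' : (0:ℤ) ≤ kO - ky := by exact_mod_cast hc1
            have hc2' : (kO - ky : ℤ) < 1 := by exact_mod_cast hc2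
            omega
          have : Omg t Emax - y = 0 := by rw [hd2, hk0]; simp
          linarith
        have hzO : z ≤ Omg t Emax := le_trans (le_abs_self z) (dk_bound (hz ▸ hmem (x + y)))
        have hxneg : x < 0 := by
          have h1 : z = (z - x) + x := by ring
          linarith
        have hdpos : 0 < z - (x + y) := by linarith
        have hxdD : x + (z - (x + y)) ∈ Dekker 2 t Emin Emax := by
          obtain ⟨kx, hkx⟩ := hxmul
          obtain ⟨kd, hkd⟩ := hdm
          have hsum : x + (z - (x + y)) = ((kx + kd : ℤ) : ℝ) * 2 ^ gx := by
            rw [hkd, hkx]; push_cast; ring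
          have habs : |x + (z - (x + y))| < 2 ^ ((t:ℤ) + gx) := by
            have h1 : |x + (z - (x + y))| ≤ |x| := by
              rw [abs_of_nonpos (by linarith [hdlex, abs_of_neg hxneg] :
                x + (z - (x + y)) ≤ 0), abs_of_neg hxneg]
              linarith
            exact lt_of_le_of_lt h1 hxlt
          rw [hsum]
          exact dk_grid hgx1 hgxE (mant_lt (by rw [← hsum]; exact habs))
        have e2 : w = y := by rw [hwO, hyO]
        have e3 : z1 = 0 := by rw [hz1, e2, sub_self, fl0]
        have e4 : v = -(x + (z - (x + y))) := by
          rw [hv, e2, show y - z = -(x + (z - (x + y))) from by ring,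
            fl_id hnear (dk_neg hxdD)]
        have e5 : z2 = -(z - (x + y)) := by
          rw [hz2, e4, show x + -(x + (z - (x + y))) = -(z - (x + y)) from by ring,
            fl_id hnear (dk_neg hdD)]
        have e6 : zz = -(z - (x + y)) := by
          rw [hzz, e3, e5, zero_add, fl_id hnear (dk_neg hdD)]
        rw [e6]; ring

end Dekker6op

/-- the 6op error free transformation over addition in Dekker's binary system. -/
theorem dekker_6op_eft_addition
    (t : ℕ) (Emin Emax : ℤ) (ht : 1 < t)
    (fl : ℝ → ℝ)
    (hmem : ∀ x, fl x ∈ Dekker 2 t Emin Emax)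
    (hnear : ∀ x, ∀ a ∈ Dekker 2 t Emin Emax, |fl x - x| ≤ |a - x|)
    (hneg : ∀ x, fl (-x) = -fl x)
    (x y : ℝ) (hx : x ∈ Dekker 2 t Emin Emax) (hy : y ∈ Dekker 2 t Emin Emax)
    (hov : |x + y| ≤ ((2 ^ t - 1 : ℤ) : ℝ) * (2 : ℝ) ^ Emax)
    (z w z1 v z2 zz : ℝ)
    (hz : z = fl (x + y)) (hw : w = fl (z - x)) (hz1 : z1 = fl (y - w))
    (hv : v = fl (w - z)) (hz2 : z2 = fl (x + v)) (hzz : zz = fl (z1 + z2)) :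
    z + zz = x + y := by
  rcases le_or_gt 0 (x + y) with hs | hs
  · exact Dekker6op.aux ht.le hmem hnear hx hy hov hs hz hw hz1 hv hz2 hzz
  · have h1 : (-z) + (-zz) = (-x) + (-y) := by
      apply Dekker6op.aux (x := -x) (y := -y) (z := -z) (w := -w) (z1 := -z1)
        (v := -v) (z2 := -z2) (zz := -zz) ht.le hmem hnear
        (Dekker6op.dk_neg hx) (Dekker6op.dk_neg hy)
      · rw [show (-x) + (-y) = -(x + y) from by ring, abs_neg]; exact hov
      · rw [show (-x) + (-y) = -(x + y) from by ring]; linarith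
      · rw [show (-x) + (-y) = -(x + y) from by ring, hneg, hz]
      · rw [show (-z) - (-x) = -(z - x) from by ring, hneg, hw]
      · rw [show (-y) - (-w) = -(y - w) from by ring, hneg, hz1]
      · rw [show (-w) - (-z) = -(w - z) from by ring, hneg, hv]
      · rw [show (-x) + (-v) = -(x + v) from by ring, hneg, hz2]
      · rw [show (-z1) + (-z2) = -(z1 + z2) from by ring, hneg, hzz]
    linarith
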